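/- Let 0 < ρ ≤ ∞, let F be infinitely differentiable on (−ρ,ρ), and fix a vector u ∈ (0,√ρ)ᴺ with pairwise distinct coordinates. Suppose that the entrywise image F[b·uuᵀ] is positive semidefinite for all b ∈ (0,1). If there exist at least N non-negative integers m with F^{(m)}(0) ≠ 0, and m₁ < m₂ < … < m_N are the N smallest such integers, then F^{(m_j)}(0) > 0 for every 1 ≤ j ≤ N. -/

import Mathlib

open Set
open scoped ENNReal

/-- The symmetric interval `(-ρ, ρ)` inside `ℝ`, for an extended parameter `0 < ρ ≤ ∞`. -/
def symmSeg (ρ : ℝ≥0∞) : Set ℝ := {x : ℝ | ENNReal.ofReal |x| < ρ}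

open Polynomial in
lemma sparse_poly_roots : ∀ (n : ℕ) (p : ℝ[X]), p ≠ 0 → p.support.card ≤ n →
    ∀ (c : ℕ) (z : Fin c → ℝ), StrictMono z → (∀ i, 0 < z i) →
    (∀ i, p.eval (z i) = 0) → c < p.support.card := by
  intro n
  induction n with
  | zero =>
    intro p hp hcard c z _ _ _
    exact absurd (Finset.card_pos.mpr (nonempty_support_iff.mpr hp)) (by omega)
  | succ n ih =>
    intro p hp hcard c z hz hzpos hzroot
    -- divide by X ^ trailing degree
    set k := p.natTrailingDegree with hk
    obtain ⟨q, hq⟩ : (X : ℝ[X]) ^ k ∣ p :=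
      X_pow_dvd_iff.mpr fun d hd => coeff_eq_zero_of_lt_natTrailingDegree hd
    have hq0 : q ≠ 0 := by rintro rfl; simp at hq; exact hp hq
    have hsupp : p.support = q.support.map ⟨(· + k), add_left_injective k⟩ := by
      ext d
      simp only [mem_support_iff, Finset.mem_map, Function.Embedding.coeFn_mk]
      constructor
      · intro hd
        have hkd : k ≤ d := natTrailingDegree_le_of_ne_zero hd
        refine ⟨d - k, ?_, by omega⟩
        rw [hq, coeff_X_pow_mul' q k d, if_pos hkd] at hd
        exact hd
      · rintro ⟨e, he, rfl⟩
        rw [hq, coeff_X_pow_mul]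
        exact he
    have hcard' : p.support.card = q.support.card := by rw [hsupp, Finset.card_map]
    rw [hcard']
    have hqroot : ∀ i, q.eval (z i) = 0 := by
      intro i
      have := hzroot i
      rw [hq, eval_mul, eval_pow, eval_X] at this
      exact (mul_eq_zero.mp this).resolve_left (pow_ne_zero k (hzpos i).ne')
    -- if c = 0, done
    rcases Nat.eq_zero_or_pos c with rfl | hc
    · exact Finset.card_pos.mpr (nonempty_support_iff.mpr hq0)
    -- q is nonconstant
    have hq00 : q.coeff 0 ≠ 0 := by
      have h1 : p.coeff k ≠ 0 := coeff_natTrailingDegree_ne_zero.mpr hp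
      have h2 : p.coeff k = q.coeff 0 := by
        conv_lhs => rw [hq]
        simpa using coeff_X_pow_mul q k 0
      rwa [h2] at h1
    have hqc : q.natDegree ≠ 0 := by
      intro h0
      have hC : q = C (q.coeff 0) := eq_C_of_natDegree_eq_zero h0
      have h2 := hqroot ⟨0, hc⟩
      rw [hC, eval_C] at h2
      exact hq00 h2
    have hd0 : derivative q ≠ 0 := fun h => hqc (natDegree_eq_zero_of_derivative_eq_zero h)
    -- derivative support bound
    have hder_supp : (derivative q).support.card < q.support.card := by
      have hsub : (derivative q).support ⊆ (q.support.erase 0).image (· - 1) := by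
        intro d hd
        rw [mem_support_iff, coeff_derivative] at hd
        have h1 : q.coeff (d + 1) ≠ 0 := by
          intro h; rw [h] at hd; simp at hd
        refine Finset.mem_image.mpr ⟨d + 1, ?_, by omega⟩
        exact Finset.mem_erase.mpr ⟨by omega, mem_support_iff.mpr h1⟩
      calc (derivative q).support.card ≤ ((q.support.erase 0).image (· - 1)).card :=
            Finset.card_le_card hsub
        _ ≤ (q.support.erase 0).card := Finset.card_image_le
        _ < q.support.card := Finset.card_erase_lt_of_mem (mem_support_iff.mpr hq00)
    -- Rolle: roots of derivative between consecutive roots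
    obtain ⟨c', rfl⟩ : ∃ c', c = c' + 1 := ⟨c - 1, by omega⟩
    have hroll : ∀ i : Fin c', ∃ w ∈ Ioo (z i.castSucc) (z i.succ),
        (derivative q).eval w = 0 := by
      intro i
      have hlt : z i.castSucc < z i.succ := hz (Fin.castSucc_lt_succ (i := i))
      obtain ⟨w, hw1, hw2⟩ := exists_deriv_eq_zero (f := fun x => eval x q) hlt
        (q.continuous.continuousOn) ((hqroot i.castSucc).trans (hqroot i.succ).symm)
      refine ⟨w, hw1, ?_⟩
      rwa [Polynomial.deriv] at hw2
    choose w hw hwroot using hroll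
    have hw_mono : StrictMono w := by
      intro a b hab
      calc w a < z a.succ := (hw a).2
        _ ≤ z b.castSucc := by
            rcases eq_or_lt_of_le (Fin.succ_le_castSucc_iff.mpr hab) with h | h
            · exact le_of_eq (congrArg z h)
            · exact (hz h).le
        _ < w b := (hw b).1
    have hw_pos : ∀ i, 0 < w i := fun i => (hzpos i.castSucc).trans (hw i).1
    have := ih (derivative q) hd0 (by omega) c' w hw_mono hw_pos hwroot
    omega

open Polynomial in
lemma gen_vandermonde_indep (N : ℕ) (u : Fin N → ℝ) (hu : ∀ i, 0 < u i)
    (huinj : Function.Injective u) (m : Fin N → ℕ) (hm : StrictMono m) :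
    LinearIndependent ℝ (fun l : Fin N => (WithLp.toLp 2 (fun i => u i ^ m l) : EuclideanSpace ℝ (Fin N))) := by
  rw [Fintype.linearIndependent_iff]
  intro g hg
  by_contra hgn
  push_neg at hgn
  obtain ⟨l0, hl0⟩ := hgn
  set p : ℝ[X] := ∑ l, C (g l) * X ^ (m l) with hp
  have hcoeff : ∀ l, p.coeff (m l) = g l := by
    intro l
    rw [hp, finset_sum_coeff]
    rw [Finset.sum_eq_single l]
    · simp
    · intro b _ hb
      simp only [coeff_C_mul, coeff_X_pow, mul_ite, mul_one, mul_zero, ite_eq_right_iff]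
      exact fun h => absurd (hm.injective h).symm hb
    · simp
  have hpne : p ≠ 0 := fun h => hl0 (by rw [← hcoeff l0, h, coeff_zero])
  have hsupp : p.support.card ≤ N := by
    have : p.support ⊆ Finset.image m Finset.univ := by
      intro d hd
      rw [mem_support_iff] at hd
      by_contra hdm
      have : ∀ l : Fin N, ¬ (m l = d) := by
        intro l h; exact hdm (Finset.mem_image.mpr ⟨l, Finset.mem_univ l, h⟩)
      apply hd
      rw [hp, finset_sum_coeff]
      apply Finset.sum_eq_zero
      intro l _
      simp only [coeff_C_mul, coeff_X_pow, mul_ite, mul_one, mul_zero, ite_eq_right_iff]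
      exact fun h => absurd h.symm (this l)
    calc p.support.card ≤ (Finset.image m Finset.univ).card := Finset.card_le_card this
      _ ≤ Finset.univ.card := Finset.card_image_le
      _ = N := by simp
  -- the u i give N distinct positive roots
  set Z : Finset ℝ := Finset.image u Finset.univ with hZ
  have hZcard : Z.card = N := by
    rw [hZ, Finset.card_image_of_injective _ huinj, Finset.card_univ, Fintype.card_fin]
  set e := Z.orderIsoOfFin hZcard with he
  have hroot : ∀ x ∈ Z, p.eval x = 0 := by
    intro x hx
    obtain ⟨i, _, rfl⟩ := Finset.mem_image.mp hx
    have := congrArg (fun x => x i) hg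
    simp only [WithLp.ofLp_sum, WithLp.ofLp_smul, WithLp.ofLp_toLp, WithLp.ofLp_zero, Finset.sum_apply, Pi.smul_apply, smul_eq_mul, Pi.zero_apply] at this
    rw [hp]
    simp only [eval_finset_sum, eval_mul, eval_C, eval_pow, eval_X]
    exact this
  have := sparse_poly_roots N p hpne hsupp N (fun i => (e i : ℝ))
    (fun a b hab => Subtype.coe_lt_coe.mpr (e.strictMono hab))
    (fun i => by obtain ⟨i', _, h⟩ := Finset.mem_image.mp (e i).2; simpa [← h] using hu i')
    (fun i => hroot _ (e i).2)
  omega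

lemma exists_orth_vector (N : ℕ) (u : Fin N → ℝ) (hu : ∀ i, 0 < u i)
    (huinj : Function.Injective u) (m : Fin N → ℕ) (hm : StrictMono m) (j : Fin N) :
    ∃ v : Fin N → ℝ, (∀ l, l < j → ∑ i, v i * u i ^ m l = 0) ∧
      (0 < ∑ i, v i * u i ^ m j) := by
  classical
  set w : Fin N → EuclideanSpace ℝ (Fin N) := fun l => WithLp.toLp 2 (fun i => u i ^ m l) with hw
  have hind := gen_vandermonde_indep N u hu huinj m hm
  set S : Submodule ℝ (EuclideanSpace ℝ (Fin N)) := Submodule.span ℝ (w '' {l | l < j}) with hS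
  have hnotmem : w j ∉ S := hind.notMem_span_image (by simp)
  set v : EuclideanSpace ℝ (Fin N) := w j - (S.orthogonalProjection (w j) : EuclideanSpace ℝ (Fin N)) with hv
  have hvorth : v ∈ Sᗮ := S.sub_starProjection_mem_orthogonal (w j)
  have hvne : v ≠ 0 := by
    intro h
    apply hnotmem
    have h2 : w j = (S.orthogonalProjection (w j) : EuclideanSpace ℝ (Fin N)) := by
      rwa [hv, sub_eq_zero] at h
    rw [h2]
    exact (S.orthogonalProjection (w j)).2
  refine ⟨v, ?_, ?_⟩
  · intro l hl
    have hWl : w l ∈ S := Submodule.subset_span ⟨l, hl, rfl⟩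
    have := hvorth (w l) hWl
    rw [real_inner_comm] at this
    simpa [PiLp.inner_apply, RCLike.inner_apply, mul_comm, hw] using this
  · have hinner : (inner ℝ v (w j) : ℝ) = ‖v‖ ^ 2 := by
      have : (inner ℝ v v : ℝ) + inner ℝ v ((S.orthogonalProjection (w j) : EuclideanSpace ℝ (Fin N))) =
          inner ℝ v (w j) := by
        rw [← inner_add_right]
        congr 1
        rw [hv]; abel
      have h0 : (inner ℝ v ((S.orthogonalProjection (w j) : EuclideanSpace ℝ (Fin N))) : ℝ) = 0 := by
        rw [real_inner_comm]
        exact hvorth _ (S.orthogonalProjection (w j)).2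
      rw [← this, h0, add_zero, real_inner_self_eq_norm_sq]
    have hpos : (0:ℝ) < inner ℝ v (w j) := by
      rw [hinner]
      exact pow_pos (norm_pos_iff.mpr hvne) 2
    calc (0:ℝ) < inner ℝ v (w j) := hpos
      _ = ∑ i, v i * u i ^ m j := by simp [PiLp.inner_apply, RCLike.inner_apply, hw, mul_comm]

lemma symmSeg_isOpen (ρ : ℝ≥0∞) : IsOpen (symmSeg ρ) := by
  have : symmSeg ρ = (fun x : ℝ => ENNReal.ofReal |x|) ⁻¹' (Iio ρ) := rfl
  rw [this]
  exact (ENNReal.continuous_ofReal.comp continuous_abs).isOpen_preimage _ isOpen_Iio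

lemma zero_mem_symmSeg {ρ : ℝ≥0∞} (hρ : 0 < ρ) : (0:ℝ) ∈ symmSeg ρ := by
  simp [symmSeg, hρ]

lemma Icc_subset_symmSeg {ρ : ℝ≥0∞} {x : ℝ} (hx : x ∈ symmSeg ρ) (hx0 : 0 ≤ x) :
    Icc (0:ℝ) x ⊆ symmSeg ρ := by
  intro y hy
  have h1 : |y| ≤ |x| := by
    rw [abs_of_nonneg hy.1, abs_of_nonneg hx0]; exact hy.2
  exact lt_of_le_of_lt (ENNReal.ofReal_le_ofReal h1) hx

lemma taylor_est (ρ : ℝ≥0∞) (hρ : 0 < ρ) (F : ℝ → ℝ)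
    (hF : ContDiffOn ℝ (⊤ : ℕ∞) F (symmSeg ρ)) (M : ℕ) (ε : ℝ) (hε : 0 < ε) :
    ∃ δ > 0, ∀ x ∈ symmSeg ρ, 0 < x → x < δ →
      |F x - (∑ k ∈ Finset.range M,
          iteratedDerivWithin k F (symmSeg ρ) 0 / (Nat.factorial k) * x ^ k)
        - iteratedDerivWithin M F (symmSeg ρ) 0 / (Nat.factorial M) * x ^ M| ≤ ε * x ^ M := by
  set s := symmSeg ρ with hs
  have hopen : IsOpen s := symmSeg_isOpen ρ
  have h0 : (0:ℝ) ∈ s := zero_mem_symmSeg hρ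
  have huniq : UniqueDiffOn ℝ s := hopen.uniqueDiffOn
  set g := iteratedDerivWithin M F s with hg
  have hgc : ContinuousAt g 0 :=
    (hF.continuousOn_iteratedDerivWithin (by exact_mod_cast le_top) huniq).continuousAt (hopen.mem_nhds h0)
  have hMfac : (0:ℝ) < Nat.factorial M := by positivity
  obtain ⟨δ, hδ, hδc⟩ := Metric.continuousAt_iff.mp hgc (ε * Nat.factorial M) (by positivity)
  refine ⟨δ, hδ, ?_⟩
  intro x hxs hx0 hxδ
  have hsub : Icc (0:ℝ) x ⊆ s := Icc_subset_symmSeg hxs hx0.le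
  -- equality of iterated derivatives on Icc and s
  have hicc : ∀ (k : ℕ) (y : ℝ), y ∈ Icc (0:ℝ) x →
      iteratedDerivWithin k F (Icc 0 x) y = iteratedDerivWithin k F s y := by
    intro k y hy
    have h1 : HasFTaylorSeriesUpToOn (⊤ : ℕ∞) F (ftaylorSeriesWithin ℝ F s) (Icc 0 x) :=
      (hF.ftaylorSeriesWithin huniq).mono hsub
    have h2 := h1.eq_iteratedFDerivWithin_of_uniqueDiffOn (m := k) (by exact_mod_cast le_top)
      (uniqueDiffOn_Icc hx0) hy
    simp only [iteratedDerivWithin_eq_iteratedFDerivWithin]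
    rw [← h2]
    rfl
  rcases M with - | n
  · -- M = 0
    simp only [Finset.range_zero, Finset.sum_empty, Nat.factorial_zero, Nat.cast_one, div_one,
      pow_zero, mul_one, sub_zero]
    have := hδc (x := x) (by simpa [Real.dist_eq, abs_of_pos hx0] using hxδ)
    rw [Real.dist_eq] at this
    have hgx : g x = F x := by rw [hg, iteratedDerivWithin_zero]
    have hg0 : g 0 = F 0 := by rw [hg, iteratedDerivWithin_zero]
    rw [hgx, hg0] at this
    calc |F x - F 0| ≤ ε * Nat.factorial 0 := by
          simpa using this.le
      _ = ε := by simp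
  · -- M = n + 1
    obtain ⟨ξ, hξ, hξeq⟩ := taylor_mean_remainder_lagrange (f := F) (x₀ := 0) (x := x) (n := n)
      hx0.ne ((hF.of_le (by exact_mod_cast le_top)).mono (by rw [uIcc_of_le hx0.le]; exact hsub))
      (by rw [uIcc_of_le hx0.le, uIoo_of_le hx0.le]; exact (((hF.mono hsub).differentiableOn_iteratedDerivWithin
        (by exact_mod_cast lt_top_iff_ne_top.mpr (by simp)) (uniqueDiffOn_Icc hx0)).mono
        Ioo_subset_Icc_self))
    rw [uIcc_of_le hx0.le] at hξeq
    rw [uIoo_of_le hx0.le] at hξ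
    have hP : taylorWithinEval F n (Icc 0 x) 0 x =
        ∑ k ∈ Finset.range (n + 1),
          iteratedDerivWithin k F s 0 / (Nat.factorial k) * x ^ k := by
      rw [taylor_within_apply]
      refine Finset.sum_congr rfl fun k hk => ?_
      rw [hicc k 0 (left_mem_Icc.mpr hx0.le)]
      simp [smul_eq_mul]
      ring
    have hξs : ξ ∈ Icc (0:ℝ) x := Ioo_subset_Icc_self hξ
    rw [hP, hicc (n+1) ξ hξs] at hξeq
    have hgξ : |g ξ - g 0| < ε * Nat.factorial (n+1) := by
      have : dist ξ 0 < δ := by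
        rw [Real.dist_eq, sub_zero, abs_of_pos hξ.1]
        exact hξ.2.trans hxδ
      simpa [Real.dist_eq] using hδc this
    have key : F x - (∑ k ∈ Finset.range (n+1),
          iteratedDerivWithin k F s 0 / (Nat.factorial k) * x ^ k)
        - iteratedDerivWithin (n+1) F s 0 / (Nat.factorial (n+1)) * x ^ (n+1)
        = (g ξ - g 0) * x ^ (n+1) / (Nat.factorial (n+1)) := by
      rw [sub_eq_iff_eq_add'] at hξeq
      rw [hξeq]
      have hfac : (Nat.factorial (n+1) : ℝ) ≠ 0 := by positivity
      field_simp
      ring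
    rw [key]
    rw [abs_div, abs_mul, abs_of_pos (pow_pos hx0 (n+1)), abs_of_pos hMfac]
    rw [div_le_iff₀ hMfac]
    calc |g ξ - g 0| * x ^ (n+1) ≤ (ε * Nat.factorial (n+1)) * x ^ (n+1) := by
          apply mul_le_mul_of_nonneg_right hgξ.le (by positivity)
      _ = ε * x ^ (n+1) * Nat.factorial (n+1) := by ring

lemma sum_mul_sum_factor {N : ℕ} (C : ℝ) (f g : Fin N → ℝ) :
    ∑ i, ∑ i', C * (f i * g i') = C * ((∑ i, f i) * (∑ i, g i)) := by
  rw [Finset.sum_mul_sum, Finset.mul_sum]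
  exact Finset.sum_congr rfl fun i _ => by rw [Finset.mul_sum]

/-- If a smooth function on `(-ρ,ρ)` preserves positive semidefiniteness entrywise for
the rank-one matrices `b · uuᵀ` (`0 < b < 1`, `u` with distinct positive coordinates
smaller than `√ρ`), then its first `N` non-zero derivatives at `0` are positive. -/
theorem first_nonzero_derivatives_pos (ρ : ℝ≥0∞) (hρ : 0 < ρ) (N : ℕ) (F : ℝ → ℝ)
    (hF : ContDiffOn ℝ (⊤ : ℕ∞) F (symmSeg ρ))
    (u : Fin N → ℝ) (hu : ∀ i, 0 < u i ∧ ENNReal.ofReal (u i ^ 2) < ρ)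
    (huinj : Function.Injective u)
    (hpos : ∀ b ∈ Set.Ioo (0 : ℝ) 1,
      (Matrix.of fun i j : Fin N => F (b * (u i * u j))).PosSemidef)
    (m : Fin N → ℕ) (hm : StrictMono m)
    (hne : ∀ j, iteratedDerivWithin (m j) F (symmSeg ρ) 0 ≠ 0)
    (hmin : ∀ k : ℕ, (∀ j, m j ≠ k) → (∃ j, k < m j) →
      iteratedDerivWithin k F (symmSeg ρ) 0 = 0) :
    ∀ j, 0 < iteratedDerivWithin (m j) F (symmSeg ρ) 0 := by
  intro j
  set s := symmSeg ρ with hsdef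
  set d : ℕ → ℝ := fun k => iteratedDerivWithin k F s 0 with hd
  set M := m j with hM
  by_contra hC
  have hdM : d M < 0 := lt_of_le_of_ne (not_lt.mp hC) (hne j)
  have hupos : ∀ i, 0 < u i := fun i => (hu i).1
  obtain ⟨v, hv1, hv2⟩ := exists_orth_vector N u hupos huinj m hm j
  set S : ℝ := ∑ i, v i * u i ^ M with hS
  have hSpos : 0 < S := hv2
  have vanish : ∀ k < M, d k = 0 ∨ (∑ i, v i * u i ^ k) = 0 := by
    intro k hk
    by_cases hex : ∃ l, m l = k
    · obtain ⟨l, rfl⟩ := hex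
      right
      exact hv1 l (hm.lt_iff_lt.mp hk)
    · left
      exact hmin k (fun l h => hex ⟨l, h⟩) ⟨j, hk⟩
  set c : ℝ := d M / Nat.factorial M with hc
  have hcneg : c < 0 := div_neg_of_neg_of_pos hdM (by positivity)
  set T : ℝ := (∑ i, |v i| * u i ^ M) * (∑ i, |v i| * u i ^ M) with hT
  have hTnn : 0 ≤ T := mul_self_nonneg _
  set ε : ℝ := (-c) * (S * S) / (2 * (T + 1)) with hε
  have hεpos : 0 < ε := by
    apply div_pos
    · apply mul_pos (by linarith) (mul_pos hSpos hSpos)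
    · linarith
  obtain ⟨δ, hδpos, hδ⟩ := taylor_est ρ hρ F hF M ε hεpos
  -- bound on products of u
  set B : ℝ := (∑ i, u i) * (∑ i, u i) with hB
  have hBpos : 0 < B := by
    have : 0 < ∑ i, u i := Finset.sum_pos (fun i _ => hupos i) ⟨j, Finset.mem_univ j⟩
    exact mul_pos this this
  have huB : ∀ i i', u i * u i' ≤ B := by
    intro i i'
    have h1 : u i ≤ ∑ i'', u i'' :=
      Finset.single_le_sum (fun i'' _ => (hupos i'').le) (Finset.mem_univ i)
    have h2 : u i' ≤ ∑ i'', u i'' :=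
      Finset.single_le_sum (fun i'' _ => (hupos i'').le) (Finset.mem_univ i')
    exact mul_le_mul h1 h2 (hupos i').le (by linarith [hupos i, Finset.sum_pos (fun i _ => hupos i) (⟨j, Finset.mem_univ j⟩ : Finset.univ.Nonempty)])
  set b : ℝ := min (1/2) (δ / (2 * B)) with hb
  have hbpos : 0 < b := lt_min (by norm_num) (by positivity)
  have hb1 : b < 1 := lt_of_le_of_lt (min_le_left _ _) (by norm_num)
  have hbmem : b ∈ Set.Ioo (0:ℝ) 1 := ⟨hbpos, hb1⟩
  set x : Fin N → Fin N → ℝ := fun i i' => b * (u i * u i') with hx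
  have hxpos : ∀ i i', 0 < x i i' := fun i i' => mul_pos hbpos (mul_pos (hupos i) (hupos i'))
  have hxs : ∀ i i', x i i' ∈ s := by
    intro i i'
    have hle : x i i' ≤ u i * u i' :=
      mul_le_of_le_one_left (mul_pos (hupos i) (hupos i')).le hb1.le
    rcases le_total (u i) (u i') with h | h
    · have : x i i' ≤ u i' ^ 2 := by nlinarith [hupos i, hupos i']
      calc ENNReal.ofReal |x i i'| = ENNReal.ofReal (x i i') := by
            rw [abs_of_pos (hxpos i i')]
        _ ≤ ENNReal.ofReal (u i' ^ 2) := ENNReal.ofReal_le_ofReal this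
        _ < ρ := (hu i').2
    · have : x i i' ≤ u i ^ 2 := by nlinarith [hupos i, hupos i']
      calc ENNReal.ofReal |x i i'| = ENNReal.ofReal (x i i') := by
            rw [abs_of_pos (hxpos i i')]
        _ ≤ ENNReal.ofReal (u i ^ 2) := ENNReal.ofReal_le_ofReal this
        _ < ρ := (hu i).2
  have hxδ : ∀ i i', x i i' < δ := by
    intro i i'
    have h1 : x i i' ≤ (δ / (2 * B)) * B := by
      rw [hx]
      apply mul_le_mul (min_le_right _ _) (huB i i')
        (mul_pos (hupos i) (hupos i')).le (by positivity)
    have : (δ / (2 * B)) * B = δ / 2 := by field_simp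
    rw [this] at h1
    linarith
  -- error terms
  set E : Fin N → Fin N → ℝ := fun i i' =>
    F (x i i') - (∑ k ∈ Finset.range M, d k / (Nat.factorial k) * (x i i') ^ k)
      - c * (x i i') ^ M with hE
  have hEbound : ∀ i i', |E i i'| ≤ ε * (x i i') ^ M := by
    intro i i'
    exact hδ (x i i') (hxs i i') (hxpos i i') (hxδ i i')
  -- positivity of quadratic form
  set Q : ℝ := ∑ i, ∑ i', v i * v i' * F (x i i') with hQ
  have hQnn : 0 ≤ Q := by
    have h := (hpos b hbmem).dotProduct_mulVec_nonneg v
    have heq : dotProduct (star v)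
        (Matrix.mulVec (Matrix.of fun i j : Fin N => F (b * (u i * u j))) v) = Q := by
      rw [hQ]
      simp only [star_trivial, dotProduct, Matrix.mulVec, Matrix.of_apply]
      refine Finset.sum_congr rfl fun i _ => ?_
      rw [Finset.mul_sum]
      refine Finset.sum_congr rfl fun i' _ => ?_
      rw [hx]
      ring
    rwa [heq] at h
  -- decompose Q
  have key : ∀ i i', v i * v i' * F (x i i')
      = (∑ k ∈ Finset.range M, d k / (Nat.factorial k) * b ^ k *
          ((v i * u i ^ k) * (v i' * u i' ^ k)))
        + c * b ^ M * ((v i * u i ^ M) * (v i' * u i' ^ M))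
        + v i * v i' * E i i' := by
    intro i i'
    have hFx : F (x i i') = (∑ k ∈ Finset.range M, d k / (Nat.factorial k) * (x i i') ^ k)
        + c * (x i i') ^ M + E i i' := by rw [hE]; ring
    rw [hFx, mul_add, mul_add]
    congr 1
    · congr 1
      · rw [Finset.mul_sum]
        refine Finset.sum_congr rfl fun k _ => ?_
        rw [hx, mul_pow, mul_pow]
        ring
      · rw [hx, mul_pow, mul_pow]
        ring
  have hQsplit : Q = (∑ k ∈ Finset.range M, d k / (Nat.factorial k) * b ^ k *
        ((∑ i, v i * u i ^ k) * (∑ i, v i * u i ^ k)))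
      + c * b ^ M * (S * S)
      + ∑ i, ∑ i', v i * v i' * E i i' := by
    rw [hQ]
    calc ∑ i, ∑ i', v i * v i' * F (x i i')
        = ∑ i, ∑ i', ((∑ k ∈ Finset.range M, d k / (Nat.factorial k) * b ^ k *
            ((v i * u i ^ k) * (v i' * u i' ^ k)))
          + c * b ^ M * ((v i * u i ^ M) * (v i' * u i' ^ M))
          + v i * v i' * E i i') :=
          Finset.sum_congr rfl fun i _ => Finset.sum_congr rfl fun i' _ => key i i'
      _ = (∑ i, ∑ i', ∑ k ∈ Finset.range M, d k / (Nat.factorial k) * b ^ k *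
            ((v i * u i ^ k) * (v i' * u i' ^ k)))
          + (∑ i, ∑ i', c * b ^ M * ((v i * u i ^ M) * (v i' * u i' ^ M)))
          + ∑ i, ∑ i', v i * v i' * E i i' := by
          simp only [Finset.sum_add_distrib]
      _ = (∑ k ∈ Finset.range M, d k / (Nat.factorial k) * b ^ k *
            ((∑ i, v i * u i ^ k) * (∑ i, v i * u i ^ k)))
          + c * b ^ M * (S * S)
          + ∑ i, ∑ i', v i * v i' * E i i' := by
          congr 1
          congr 1
          · calc ∑ i, ∑ i', ∑ k ∈ Finset.range M, d k / (Nat.factorial k) * b ^ k *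
                  ((v i * u i ^ k) * (v i' * u i' ^ k))
                = ∑ i, ∑ k ∈ Finset.range M, ∑ i', d k / (Nat.factorial k) * b ^ k *
                  ((v i * u i ^ k) * (v i' * u i' ^ k)) :=
                  Finset.sum_congr rfl fun i _ => Finset.sum_comm
              _ = ∑ k ∈ Finset.range M, ∑ i, ∑ i', d k / (Nat.factorial k) * b ^ k *
                  ((v i * u i ^ k) * (v i' * u i' ^ k)) := Finset.sum_comm
              _ = ∑ k ∈ Finset.range M, d k / (Nat.factorial k) * b ^ k *
                  ((∑ i, v i * u i ^ k) * (∑ i, v i * u i ^ k)) :=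
                  Finset.sum_congr rfl fun k _ => sum_mul_sum_factor _ _ _
          · rw [hS]
            exact sum_mul_sum_factor _ _ _
  -- first sum vanishes
  have hT1 : (∑ k ∈ Finset.range M, d k / (Nat.factorial k) * b ^ k *
        ((∑ i, v i * u i ^ k) * (∑ i, v i * u i ^ k))) = 0 := by
    apply Finset.sum_eq_zero
    intro k hk
    rcases vanish k (Finset.mem_range.mp hk) with h | h
    · rw [h]; ring
    · rw [h]; ring
  -- bound the error sum
  have hT3 : (∑ i, ∑ i', v i * v i' * E i i') ≤ ε * b ^ M * T := by
    have hbd : ∀ i i', v i * v i' * E i i'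
        ≤ ε * b ^ M * ((|v i| * u i ^ M) * (|v i'| * u i' ^ M)) := by
      intro i i'
      calc v i * v i' * E i i' ≤ |v i * v i' * E i i'| := le_abs_self _
        _ = |v i| * |v i'| * |E i i'| := by rw [abs_mul, abs_mul]
        _ ≤ |v i| * |v i'| * (ε * (x i i') ^ M) := by
            apply mul_le_mul_of_nonneg_left (hEbound i i') (by positivity)
        _ = ε * b ^ M * ((|v i| * u i ^ M) * (|v i'| * u i' ^ M)) := by
            rw [hx, mul_pow, mul_pow]
            ring
    calc (∑ i, ∑ i', v i * v i' * E i i')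
        ≤ ∑ i, ∑ i', ε * b ^ M * ((|v i| * u i ^ M) * (|v i'| * u i' ^ M)) :=
          Finset.sum_le_sum fun i _ => Finset.sum_le_sum fun i' _ => hbd i i'
      _ = ε * b ^ M * T := by
          rw [hT]
          exact sum_mul_sum_factor _ _ _
  -- conclude
  have hbM : 0 < b ^ M := pow_pos hbpos M
  have hfinal : 0 ≤ b ^ M * (c * (S * S) + ε * T) := by
    have h0 := hQnn
    rw [hQsplit, hT1, zero_add] at h0
    nlinarith [hT3]
  have h1 : 0 ≤ c * (S * S) + ε * T := by
    by_contra hneg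
    push_neg at hneg
    have h2 : b ^ M * (c * (S * S) + ε * T) < 0 := mul_neg_of_pos_of_neg hbM hneg
    linarith
  have hεT : ε * (T + 1) = (-c) * (S * S) / 2 := by
    rw [hε]
    field_simp
  have h3 : ε * (T + 1) = ε * T + ε := by ring
  have h4 : c * (S * S) < 0 := mul_neg_of_neg_of_pos hcneg (mul_pos hSpos hSpos)
  linarith
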